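/- Let f^d : V → ℝ≥0 be a probability mass function on a finite set V ⊆ ℝ^n satisfying the affiliation (MTP₂) condition: f^d(v ⊔ v')·f^d(v ⊓ v') ≥ f^d(v)·f^d(v') for all v, v' ∈ V (with componentwise max/min), where f^d is extended by 0 outside V. Let δ > 0 be smaller than the minimum distance between distinct coordinates appearing in V. Define f^c : ℝ^n → ℝ≥0 by f^c(x) = f^d(v)/δ^n if x lies in the hyperrectangle [v₁, v₁+δ]×…×[vₙ, vₙ+δ] for some v ∈ V, and f^c(x) = 0 otherwise. Then f^c also satisfies the affiliation condition: f^c(x ⊔ x')·f^c(x ⊓ x') ≥ f^c(x)·f^c(x') for all x, x' ∈ ℝ^n. -/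

import Mathlib

/-- Discretization of a discrete affiliated pmf into a piecewise-constant density
preserves the affiliation (MTP₂) condition. -/
theorem affiliation_preserved_by_hyperrectangle_densification
    (n : ℕ) (V : Finset (Fin n → ℝ)) (fd : (Fin n → ℝ) → ℝ) (δ : ℝ) (hδ : 0 < δ)
    (hnonneg : ∀ v, 0 ≤ fd v)
    (hsupp : ∀ v, v ∉ V → fd v = 0)
    (haff : ∀ v v' : Fin n → ℝ, fd v * fd v' ≤ fd (v ⊔ v') * fd (v ⊓ v'))
    (hδsmall : ∀ v ∈ V, ∀ v' ∈ V, ∀ i j : Fin n, v i ≠ v' j → δ < |v i - v' j|)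
    (fc : (Fin n → ℝ) → ℝ)
    (hfc : ∀ (x : Fin n → ℝ) (v : Fin n → ℝ), v ∈ V →
      (∀ i, x i ∈ Set.Icc (v i) (v i + δ)) → fc x = fd v / δ ^ n)
    (hfc0 : ∀ x : Fin n → ℝ,
      (¬ ∃ v ∈ V, ∀ i, x i ∈ Set.Icc (v i) (v i + δ)) → fc x = 0) :
    ∀ x x' : Fin n → ℝ, fc x * fc x' ≤ fc (x ⊔ x') * fc (x ⊓ x') := by
  have hpow : (0:ℝ) < δ ^ n := pow_pos hδ n
  have hfcnn : ∀ x, 0 ≤ fc x := by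
    intro x
    by_cases h : ∃ v ∈ V, ∀ i, x i ∈ Set.Icc (v i) (v i + δ)
    · obtain ⟨v, hv, hx⟩ := h
      rw [hfc x v hv hx]
      exact div_nonneg (hnonneg v) hpow.le
    · rw [hfc0 x h]
  intro x x'
  by_cases hx : ∃ v ∈ V, ∀ i, x i ∈ Set.Icc (v i) (v i + δ)
  · by_cases hx' : ∃ v ∈ V, ∀ i, x' i ∈ Set.Icc (v i) (v i + δ)
    · obtain ⟨v, hv, hxv⟩ := hx
      obtain ⟨v', hv', hxv'⟩ := hx'
      have hsup : ∀ i, (x ⊔ x') i ∈ Set.Icc ((v ⊔ v') i) ((v ⊔ v') i + δ) := by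
        intro i
        have h1 := hxv i; have h2 := hxv' i
        simp only [Set.mem_Icc, Pi.sup_apply] at *
        refine ⟨sup_le_sup h1.1 h2.1, sup_le ?_ ?_⟩
        · exact h1.2.trans (add_le_add_left le_sup_left δ)
        · exact h2.2.trans (add_le_add_left le_sup_right δ)
      have hinf : ∀ i, (x ⊓ x') i ∈ Set.Icc ((v ⊓ v') i) ((v ⊓ v') i + δ) := by
        intro i
        have h1 := hxv i; have h2 := hxv' i
        simp only [Set.mem_Icc, Pi.inf_apply] at *
        refine ⟨inf_le_inf h1.1 h2.1, ?_⟩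
        have : x i ⊓ x' i ≤ (v i + δ) ⊓ (v' i + δ) := inf_le_inf h1.2 h2.2
        have heq : (v i + δ) ⊓ (v' i + δ) = v i ⊓ v' i + δ := by
          simp [min_add_add_right]
        linarith [this, heq.le]
      rw [hfc x v hv hxv, hfc x' v' hv' hxv']
      by_cases hVs : v ⊔ v' ∈ V
      · by_cases hVi : v ⊓ v' ∈ V
        · rw [hfc _ _ hVs hsup, hfc _ _ hVi hinf, div_mul_div_comm, div_mul_div_comm]
          exact div_le_div_of_nonneg_right (haff v v') (by positivity) |>.trans_eq rfl
        · have h0 : fd v * fd v' ≤ 0 := by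
            have := haff v v'
            rw [hsupp _ hVi, mul_zero] at this
            exact this
          have : fd v / δ ^ n * (fd v' / δ ^ n) ≤ 0 := by
            rw [div_mul_div_comm]
            exact div_nonpos_of_nonpos_of_nonneg h0 (by positivity)
          exact this.trans (mul_nonneg (hfcnn _) (hfcnn _))
      · have h0 : fd v * fd v' ≤ 0 := by
          have := haff v v'
          rw [hsupp _ hVs, zero_mul] at this
          exact this
        have : fd v / δ ^ n * (fd v' / δ ^ n) ≤ 0 := by
          rw [div_mul_div_comm]
          exact div_nonpos_of_nonpos_of_nonneg h0 (by positivity)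
        exact this.trans (mul_nonneg (hfcnn _) (hfcnn _))
    · rw [hfc0 x' hx', mul_zero]
      exact mul_nonneg (hfcnn _) (hfcnn _)
  · rw [hfc0 x hx, zero_mul]
    exact mul_nonneg (hfcnn _) (hfcnn _)
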